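/- Let p(· | θ) be a strictly positive Gibbs distribution on finite variables with zero-normalized identifiable potentials over the clique system C of graph G, and let q ∈ C with q ⊆ A_q ⊆ V where A_q satisfies the Strong LAP condition for q. If p(x_{A_q} | α) is any zero-normalized identifiable Gibbs parametrization of the marginal distribution over A_q, then α_q = θ_q (Strong LAP Argument). -/

import Mathlib

/-- Path connectivity with respect to `V \ A`. -/
def RelPathConn {V : Type*} (G : SimpleGraph V) (A : Set V) (i j : V) : Prop :=
  ∃ w : G.Walk i j, w.IsPath ∧ w.support.tail.dropLast ≠ [] ∧
    ∀ v ∈ w.support.tail.dropLast, v ∉ A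

/-- The Strong LAP condition for a clique `q` and a set `A` with `q ⊆ A`. -/
def StrongLAP {V : Type*} (G : SimpleGraph V) (A q : Set V) : Prop :=
  q ⊆ A ∧ ∃ i ∈ q, ∃ j ∈ q, i ≠ j ∧ ¬ RelPathConn G A i j

/-- Substitute `z` outside `s`. -/
def LAPsub {V : Type*} [DecidableEq V] {X : V → Type*} (z : ∀ v, X v)
    (s : Finset V) (x : ∀ v, X v) : ∀ v, X v := fun v => if v ∈ s then x v else z v

/-- Möbius functional over clique `q`. -/
noncomputable def LAPphi {V : Type*} [DecidableEq V] {X : V → Type*} (z : ∀ v, X v)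
    (q : Finset V) (F : (∀ v, X v) → ℝ) (x : ∀ v, X v) : ℝ :=
  ∑ s ∈ q.powerset, (-1 : ℝ) ^ (q.card - s.card) * F (LAPsub z s x)

lemma LAPphi_congr {V : Type*} [DecidableEq V] {X : V → Type*} (z : ∀ v, X v)
    (q : Finset V) {F G : (∀ v, X v) → ℝ} (x : ∀ v, X v) (h : ∀ y, F y = G y) :
    LAPphi z q F x = LAPphi z q G x := by
  unfold LAPphi
  exact Finset.sum_congr rfl fun s _ => by rw [h]

lemma LAPphi_indep {V : Type*} [DecidableEq V] {X : V → Type*} (z : ∀ v, X v)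
    (q : Finset V) (F : (∀ v, X v) → ℝ) (x : ∀ v, X v) (t : V) (ht : t ∈ q)
    (hF : ∀ y y' : ∀ v, X v, (∀ v, v ≠ t → y v = y' v) → F y = F y') :
    LAPphi z q F x = 0 := by
  classical
  unfold LAPphi
  rw [← Finset.insert_erase ht,
    Finset.sum_powerset_insert (Finset.notMem_erase t q), ← Finset.sum_add_distrib]
  rw [Finset.insert_erase ht]
  apply Finset.sum_eq_zero
  intro s hs
  rw [Finset.mem_powerset] at hs
  have hts : t ∉ s := fun h => Finset.notMem_erase t q (hs h)
  have hcard : (insert t s).card = s.card + 1 := Finset.card_insert_of_notMem hts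
  have hsq : s.card + 1 ≤ q.card := by
    have : (insert t s).card ≤ q.card := by
      apply Finset.card_le_card
      intro v hv
      rcases Finset.mem_insert.1 hv with rfl | hv
      · exact ht
      · exact Finset.erase_subset t q (hs hv)
    omega
  have hFval : F (LAPsub z s x) = F (LAPsub z (insert t s) x) := by
    apply hF
    intro v hv
    unfold LAPsub
    simp only [Finset.mem_insert]
    by_cases h : v ∈ s <;> simp [h, hv]
  have hsign : (-1 : ℝ) ^ (q.card - s.card) = -(-1 : ℝ) ^ (q.card - (insert t s).card) := by
    rw [hcard]
    have h1 : q.card - s.card = (q.card - (s.card + 1)) + 1 := by omega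
    rw [h1, pow_succ]
    ring
  rw [hFval, hsign, hcard]
  ring

lemma LAPphi_pot {V : Type*} [DecidableEq V] {X : V → Type*} (z : ∀ v, X v)
    (q c : Finset V) (F : (∀ v, X v) → ℝ) (x : ∀ v, X v)
    (Floc : ∀ y y' : ∀ v, X v, (∀ v ∈ c, y v = y' v) → F y = F y')
    (Fnorm : ∀ y : ∀ v, X v, (∃ t ∈ c, y t = z t) → F y = 0) :
    LAPphi z q F x = if c = q then F x else 0 := by
  classical
  by_cases hqc : q ⊆ c
  · by_cases hcq : c = q
    · subst hcq
      simp only [if_pos rfl]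
      unfold LAPphi
      rw [Finset.sum_eq_single_of_mem c (Finset.mem_powerset_self c)]
      · rw [Nat.sub_self, pow_zero, one_mul]
        apply Floc
        intro v hv
        simp [LAPsub, hv]
      · intro s hs hne
        rw [Finset.mem_powerset] at hs
        obtain ⟨t, htc, hts⟩ := Finset.exists_of_ssubset (Finset.ssubset_iff_subset_ne.2 ⟨hs, hne⟩)
        rw [Fnorm _ ⟨t, htc, by simp [LAPsub, hts]⟩, mul_zero]
    · obtain ⟨t, htc, htq⟩ :=
        Finset.exists_of_ssubset (Finset.ssubset_iff_subset_ne.2 ⟨hqc, Ne.symm hcq⟩)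
      rw [if_neg hcq]
      unfold LAPphi
      apply Finset.sum_eq_zero
      intro s hs
      rw [Finset.mem_powerset] at hs
      have : t ∉ s := fun h => htq (hs h)
      rw [Fnorm _ ⟨t, htc, by simp [LAPsub, this]⟩, mul_zero]
  · have hcq : c ≠ q := fun h => hqc (h ▸ le_refl _)
    rw [if_neg hcq]
    obtain ⟨t, htq, htc⟩ := Finset.not_subset.1 hqc
    exact LAPphi_indep z q F x t htq fun y y' h => Floc y y' fun v hv => h v (fun e => htc (e ▸ hv))

lemma LAPphi_rep {V : Type*} [DecidableEq V] {X : V → Type*} (z : ∀ v, X v)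
    (q : Finset V) (x : ∀ v, X v) (a : ℝ) (D : Finset (Finset V))
    (F : Finset V → (∀ v, X v) → ℝ)
    (hloc : ∀ c ∈ D, ∀ y y' : ∀ v, X v, (∀ v ∈ c, y v = y' v) → F c y = F c y')
    (hnorm : ∀ c ∈ D, ∀ y : ∀ v, X v, (∃ t ∈ c, y t = z t) → F c y = 0)
    (hq : q ∈ D) (t : V) (ht : t ∈ q) :
    LAPphi z q (fun y => a - ∑ c ∈ D, F c y) x = -(F q x) := by
  classical
  have expand : LAPphi z q (fun y => a - ∑ c ∈ D, F c y) x
      = LAPphi z q (fun _ => a) x - ∑ c ∈ D, LAPphi z q (F c) x := by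
    unfold LAPphi
    have h1 : ∀ s ∈ q.powerset,
        (-1 : ℝ) ^ (q.card - s.card) * (a - ∑ c ∈ D, F c (LAPsub z s x))
        = (-1 : ℝ) ^ (q.card - s.card) * a
          - ∑ c ∈ D, (-1 : ℝ) ^ (q.card - s.card) * F c (LAPsub z s x) := by
      intro s _
      rw [mul_sub, Finset.mul_sum]
    rw [Finset.sum_congr rfl h1, Finset.sum_sub_distrib, Finset.sum_comm]
  rw [expand, LAPphi_indep z q (fun _ => a) x t ht (fun _ _ _ => rfl)]
  have : ∑ c ∈ D, LAPphi z q (F c) x = ∑ c ∈ D, if c = q then F q x else 0 := by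
    apply Finset.sum_congr rfl
    intro c hc
    rw [LAPphi_pot z q c (F c) x (hloc c hc) (hnorm c hc)]
    split <;> simp_all
  rw [this, Finset.sum_ite_eq' D q (fun _ => F q x), if_pos hq]
  ring

lemma LAPphi_main {V : Type*} [DecidableEq V] {X : V → Type*} (z : ∀ v, X v)
    (q : Finset V) (x : ∀ v, X v) (a : ℝ) (D : Finset (Finset V))
    (F : Finset V → (∀ v, X v) → ℝ) (S T : (∀ v, X v) → ℝ)
    (hloc : ∀ c ∈ D, ∀ y y' : ∀ v, X v, (∀ v ∈ c, y v = y' v) → F c y = F c y')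
    (hnorm : ∀ c ∈ D, ∀ y : ∀ v, X v, (∃ t ∈ c, y t = z t) → F c y = 0)
    (hq : q ∈ D) (tS tT t : V) (htS : tS ∈ q) (htT : tT ∈ q) (ht : t ∈ q)
    (hS : ∀ y y' : ∀ v, X v, (∀ v, v ≠ tS → y v = y' v) → S y = S y')
    (hT : ∀ y y' : ∀ v, X v, (∀ v, v ≠ tT → y v = y' v) → T y = T y') :
    LAPphi z q (fun y => (a - ∑ c ∈ D, F c y) + (S y + T y)) x = -(F q x) := by
  have expand : LAPphi z q (fun y => (a - ∑ c ∈ D, F c y) + (S y + T y)) x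
      = LAPphi z q (fun y => a - ∑ c ∈ D, F c y) x + (LAPphi z q S x + LAPphi z q T x) := by
    unfold LAPphi
    rw [← Finset.sum_add_distrib, ← Finset.sum_add_distrib]
    exact Finset.sum_congr rfl fun s _ => by ring
  rw [expand, LAPphi_rep z q x a D F hloc hnorm hq t ht,
    LAPphi_indep z q S x tS htS hS, LAPphi_indep z q T x tT htT hT]
  ring

lemma LAPreach_not_adj {V : Type*} (G : SimpleGraph V) (A : Set V) (i j v : V)
    (hiA : i ∈ A) (hij : i ≠ j) (hnc : ¬ RelPathConn G A i j)
    (hv : v ∉ A) (hjA : j ∈ A) (w : G.Walk i v) (hw : ∀ u ∈ w.support.tail, u ∉ A)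
    (hadj : G.Adj v j) : False := by
  classical
  set P := w.bypass with hPdef
  have hP : P.IsPath := SimpleGraph.Walk.bypass_isPath w
  have hsub : P.support ⊆ w.support := SimpleGraph.Walk.support_bypass_subset w
  have hPt : ∀ u ∈ P.support.tail, u ∉ A := by
    intro u hu
    have hunei : u ≠ i := by
      intro h
      have hnd : (i :: P.support.tail).Nodup := by
        rw [← SimpleGraph.Walk.support_eq_cons]; exact hP.support_nodup
      exact (List.nodup_cons.1 hnd).1 (h ▸ hu)
    have : u ∈ w.support := hsub (by rw [SimpleGraph.Walk.support_eq_cons]; exact List.mem_cons_of_mem _ hu)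
    rw [SimpleGraph.Walk.support_eq_cons] at this
    rcases List.mem_cons.1 this with h | h
    · exact absurd h hunei
    · exact hw u h
  have hjP : j ∉ P.support := by
    rw [SimpleGraph.Walk.support_eq_cons]
    intro h
    rcases List.mem_cons.1 h with h | h
    · exact hij h.symm
    · exact hPt j h hjA
  have hvi : v ≠ i := fun h => hv (h ▸ hiA)
  let Q : G.Walk i j := (SimpleGraph.Walk.cons hadj.symm P.reverse).reverse
  have hQpath : Q.IsPath := by
    apply SimpleGraph.Walk.IsPath.reverse
    apply SimpleGraph.Walk.IsPath.cons hP.reverse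
    rw [SimpleGraph.Walk.support_reverse, List.mem_reverse]
    exact hjP
  have hQsupp : Q.support = i :: (P.support.tail ++ [j]) := by
    rw [show Q = (SimpleGraph.Walk.cons hadj.symm P.reverse).reverse from rfl,
      SimpleGraph.Walk.support_reverse, SimpleGraph.Walk.support_cons, List.reverse_cons,
      SimpleGraph.Walk.support_reverse, List.reverse_reverse]
    rw [SimpleGraph.Walk.support_eq_cons P]
    simp
    rw [SimpleGraph.Walk.support_eq_cons P]; rfl
  have htail : P.support.tail ≠ [] := by
    intro h
    have hv' : v ∈ P.support := SimpleGraph.Walk.end_mem_support P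
    rw [SimpleGraph.Walk.support_eq_cons, h] at hv'
    simp at hv'
    exact hvi hv'
  apply hnc
  refine ⟨Q, hQpath, ?_, ?_⟩
  · rw [hQsupp]
    simpa using htail
  · intro u hu
    rw [hQsupp] at hu
    simp only [List.tail_cons, List.dropLast_concat] at hu
    exact hPt u hu

/-- **Strong LAP Argument.**  Let `p(· | θ)` be a strictly positive Gibbs
distribution with zero-normalized identifiable parametrized potentials
`E c (θ c)` over a clique system `C` of the graph `G`, and let `q ∈ C` satisfy
`q ⊆ A_q ⊆ V`, where `A_q` satisfies the Strong LAP condition for `q`.  If the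
marginal over `A_q` is given a zero-normalized identifiable Gibbs parametrization
(with the same parametric form for its potentials) over a clique system `C'` of
subsets of `A_q` containing `q`, with parameters `α`, then `α q = θ q`. -/
theorem strong_LAP_argument
    {V : Type*} [Fintype V] [DecidableEq V] (X : V → Type*) [∀ v, Fintype (X v)]
    [∀ v, DecidableEq (X v)] (z : ∀ v, X v) (G : SimpleGraph V)
    (Θ : Finset V → Type*) (E : (c : Finset V) → Θ c → (∀ v, X v) → ℝ)
    (hEloc : ∀ c (ϑ : Θ c) x y, (∀ v ∈ c, x v = y v) → E c ϑ x = E c ϑ y)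
    (hEnorm : ∀ c (ϑ : Θ c) x, (∃ t ∈ c, x t = z t) → E c ϑ x = 0)
    (hEident : ∀ c (ϑ ϑ' : Θ c), E c ϑ = E c ϑ' → ϑ = ϑ')
    (C : Finset (Finset V)) (hC : ∀ c ∈ C, G.IsClique (c : Set V))
    (θ : (c : Finset V) → Θ c)
    (Z : ℝ) (hZ : 0 < Z) (p : (∀ v, X v) → ℝ)
    (hp : ∀ x, p x = (1 / Z) * Real.exp (-∑ c ∈ C, E c (θ c) x))
    (hsum : ∑ x, p x = 1)
    (Aq q : Finset V) (hqC : q ∈ C) (hqA : q ⊆ Aq)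
    (hlap : StrongLAP G (Aq : Set V) (q : Set V))
    (C' : Finset (Finset V)) (hC' : ∀ c ∈ C', c ⊆ Aq) (hqC' : q ∈ C')
    (α : (c : Finset V) → Θ c)
    (Z' : ℝ) (hZ' : 0 < Z')
    (hmarg : ∀ x, (∑ y : ∀ v, X v, if ∀ v ∈ Aq, y v = x v then p y else 0) =
        (1 / Z') * Real.exp (-∑ c ∈ C', E c (α c) x)) :
    α q = θ q := by
  classical
  obtain ⟨-, i, hiq', j, hjq', hij, hnc⟩ := hlap
  have hiq : i ∈ q := hiq'
  have hjq : j ∈ q := hjq'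
  have hiAq : i ∈ Aq := hqA hiq
  have hjAq : j ∈ Aq := hqA hjq
  -- W1 : vertices reachable from i through the complement of Aq
  set W1 : Finset V := Finset.univ.filter
      (fun v => v ∉ Aq ∧ ∃ w : G.Walk i v, ∀ u ∈ w.support.tail, u ∉ Aq) with hW1def
  have hW1mem : ∀ v, v ∈ W1 ↔
      (v ∉ Aq ∧ ∃ w : G.Walk i v, ∀ u ∈ w.support.tail, u ∉ Aq) := by
    intro v
    rw [hW1def, Finset.mem_filter]
    exact ⟨fun h => h.2, fun h => ⟨Finset.mem_univ _, h⟩⟩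
  have hW1A : ∀ v ∈ W1, v ∉ Aq := fun v hv => ((hW1mem v).1 hv).1
  have hW1base : ∀ u, u ∉ Aq → G.Adj i u → u ∈ W1 := by
    intro u hu hadj
    refine (hW1mem u).2 ⟨hu, SimpleGraph.Walk.cons hadj SimpleGraph.Walk.nil, ?_⟩
    intro v hv
    simp only [SimpleGraph.Walk.support_cons, SimpleGraph.Walk.support_nil,
      List.tail_cons, List.mem_singleton] at hv
    subst hv; exact hu
  have hW1step : ∀ v u, v ∈ W1 → u ∉ Aq → G.Adj v u → u ∈ W1 := by
    intro v u hv hu hadj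
    obtain ⟨hvA, w, hw⟩ := (hW1mem v).1 hv
    refine (hW1mem u).2 ⟨hu, w.concat hadj, ?_⟩
    intro x hx
    rw [SimpleGraph.Walk.support_concat,
      SimpleGraph.Walk.support_eq_cons w] at hx
    simp only [List.cons_append, List.tail_cons, List.mem_append, List.mem_singleton] at hx
    rcases hx with hx | rfl
    · exact hw x hx
    · exact hu
  have hW1j : ∀ v, v ∈ W1 → G.Adj v j → False := by
    intro v hv hadj
    obtain ⟨hvA, w, hw⟩ := (hW1mem v).1 hv
    exact LAPreach_not_adj G (Aq : Set V) i j v (by simpa using hiAq) hij hnc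
      (by simpa using hvA) (by simpa using hjAq) w
      (fun u hu => by simpa using hw u hu) hadj
  -- decomposition of the clique system
  set Cin : Finset (Finset V) := C.filter (fun c => c ⊆ Aq) with hCin_def
  set C1 : Finset (Finset V) := (C \ Cin).filter (fun c => ∀ v ∈ c, v ∉ Aq → v ∈ W1)
    with hC1_def
  set C2 : Finset (Finset V) := (C \ Cin) \ C1 with hC2_def
  have hCinC : Cin ⊆ C := Finset.filter_subset _ _
  have hC1sub : C1 ⊆ C \ Cin := Finset.filter_subset _ _
  have hqCin : q ∈ Cin := Finset.mem_filter.2 ⟨hqC, hqA⟩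
  have hout : ∀ c, c ∈ C \ Cin → ∃ v ∈ c, v ∉ Aq := by
    intro c hc
    rw [Finset.mem_sdiff, hCin_def, Finset.mem_filter] at hc
    have : ¬ c ⊆ Aq := fun h => hc.2 ⟨hc.1, h⟩
    obtain ⟨v, hv1, hv2⟩ := Finset.not_subset.1 this
    exact ⟨v, hv1, hv2⟩
  have hC1j : ∀ c ∈ C1, j ∉ c := by
    intro c hc hjc
    have hcC : c ∈ C := (Finset.sdiff_subset) (hC1sub hc)
    obtain ⟨v, hvc, hvA⟩ := hout c (hC1sub hc)
    have hW1v : v ∈ W1 := (Finset.mem_filter.1 hc).2 v hvc hvA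
    have hvj : v ≠ j := fun h => hvA (h ▸ hjAq)
    exact hW1j v hW1v ((hC c hcC) (Finset.mem_coe.2 hvc) (Finset.mem_coe.2 hjc) hvj)
  have hC2i : ∀ c ∈ C2, i ∉ c ∧ ∀ v ∈ c, v ∉ Aq → v ∉ W1 := by
    intro c hc
    rw [hC2_def, Finset.mem_sdiff] at hc
    obtain ⟨hcout, hcnot⟩ := hc
    have hcC : c ∈ C := Finset.sdiff_subset hcout
    have hne : ¬ ∀ v ∈ c, v ∉ Aq → v ∈ W1 := fun h => hcnot (Finset.mem_filter.2 ⟨hcout, h⟩)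
    push_neg at hne
    obtain ⟨v0, hv0c, hv0A, hv0W⟩ := hne
    constructor
    · intro hic
      apply hv0W
      have hvi : v0 ≠ i := fun h => hv0A (h ▸ hiAq)
      exact hW1base v0 hv0A ((hC c hcC) (Finset.mem_coe.2 hic) (Finset.mem_coe.2 hv0c) hvi.symm)
    · intro v hvc hvA hW1v
      apply hv0W
      by_cases hvv : v = v0
      · exact hvv ▸ hW1v
      · exact hW1step v v0 hW1v hv0A ((hC c hcC) (Finset.mem_coe.2 hvc) (Finset.mem_coe.2 hv0c) hvv)
  -- substitution maps and partial partition functions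
  set sub1 : (∀ v, X v) → (∀ v, X v) → (∀ v, X v) :=
    fun x y => fun v => if v ∈ Aq then x v else if v ∈ W1 then y v else z v with hsub1_def
  set sub2 : (∀ v, X v) → (∀ v, X v) → (∀ v, X v) :=
    fun x y => fun v => if v ∈ Aq then x v else if v ∈ W1 then z v else y v with hsub2_def
  set B1 : Finset (∀ v, X v) :=
    Finset.univ.filter (fun y => ∀ v, ¬(v ∉ Aq ∧ v ∈ W1) → y v = z v) with hB1_def
  set B2 : Finset (∀ v, X v) :=
    Finset.univ.filter (fun y => ∀ v, ¬(v ∉ Aq ∧ v ∉ W1) → y v = z v) with hB2_def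
  set S1 : (∀ v, X v) → ℝ :=
    fun x => ∑ y ∈ B1, Real.exp (-∑ c ∈ C1, E c (θ c) (sub1 x y)) with hS1_def
  set S2 : (∀ v, X v) → ℝ :=
    fun x => ∑ y ∈ B2, Real.exp (-∑ c ∈ C2, E c (θ c) (sub2 x y)) with hS2_def
  have hzB1 : z ∈ B1 := Finset.mem_filter.2 ⟨Finset.mem_univ _, fun v _ => rfl⟩
  have hzB2 : z ∈ B2 := Finset.mem_filter.2 ⟨Finset.mem_univ _, fun v _ => rfl⟩
  have hS1pos : ∀ x, 0 < S1 x := fun x =>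
    Finset.sum_pos (fun y _ => Real.exp_pos _) ⟨z, hzB1⟩
  have hS2pos : ∀ x, 0 < S2 x := fun x =>
    Finset.sum_pos (fun y _ => Real.exp_pos _) ⟨z, hzB2⟩
  have hS1indep : ∀ x x' : ∀ v, X v, (∀ v, v ≠ j → x v = x' v) → S1 x = S1 x' := by
    intro x x' hxx'
    apply Finset.sum_congr rfl
    intro y _
    congr 1
    congr 1
    apply Finset.sum_congr rfl
    intro c hc
    apply hEloc
    intro v hv
    have hvj : v ≠ j := fun h => hC1j c hc (h ▸ hv)
    show (if v ∈ Aq then x v else _) = (if v ∈ Aq then x' v else _)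
    by_cases hvA : v ∈ Aq
    · simp only [if_pos hvA]
      exact hxx' v hvj
    · simp only [if_neg hvA]
  have hS2indep : ∀ x x' : ∀ v, X v, (∀ v, v ≠ i → x v = x' v) → S2 x = S2 x' := by
    intro x x' hxx'
    apply Finset.sum_congr rfl
    intro y _
    congr 1
    congr 1
    apply Finset.sum_congr rfl
    intro c hc
    apply hEloc
    intro v hv
    have hvi : v ≠ i := fun h => (hC2i c hc).1 (h ▸ hv)
    show (if v ∈ Aq then x v else _) = (if v ∈ Aq then x' v else _)
    by_cases hvA : v ∈ Aq
    · simp only [if_pos hvA]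
      exact hxx' v hvi
    · simp only [if_neg hvA]
  -- splitting of the energy
  have hsplit : ∀ y : ∀ v, X v, ∑ c ∈ C, E c (θ c) y =
      ∑ c ∈ Cin, E c (θ c) y + (∑ c ∈ C1, E c (θ c) y + ∑ c ∈ C2, E c (θ c) y) := by
    intro y
    rw [← Finset.sum_sdiff hCinC, ← Finset.sum_sdiff hC1sub, ← hC2_def]
    ring
  -- factorization of the marginal
  have hfact : ∀ x : ∀ v, X v,
      (∑ y : ∀ v, X v, if ∀ v ∈ Aq, y v = x v then p y else 0)
      = (1 / Z) * (Real.exp (-∑ c ∈ Cin, E c (θ c) x) * (S1 x * S2 x)) := by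
    intro x
    have step1 : (∑ y : ∀ v, X v, if ∀ v ∈ Aq, y v = x v then p y else 0)
        = (1 / Z) * ∑ y ∈ Finset.univ.filter (fun y => ∀ v ∈ Aq, y v = x v),
            Real.exp (-∑ c ∈ C, E c (θ c) y) := by
      rw [Finset.mul_sum, Finset.sum_filter]
      apply Finset.sum_congr rfl
      intro y _
      rw [hp y]
    rw [step1]
    congr 1
    set A : Finset (∀ v, X v) := Finset.univ.filter (fun y => ∀ v ∈ Aq, y v = x v) with hA_def
    have step2 : ∑ y ∈ A, Real.exp (-∑ c ∈ C, E c (θ c) y)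
        = Real.exp (-∑ c ∈ Cin, E c (θ c) x) *
            ∑ y ∈ A, Real.exp (-∑ c ∈ C1, E c (θ c) y) * Real.exp (-∑ c ∈ C2, E c (θ c) y) := by
      rw [Finset.mul_sum]
      apply Finset.sum_congr rfl
      intro y hy
      have hyA : ∀ v ∈ Aq, y v = x v := (Finset.mem_filter.1 hy).2
      have hCinEq : ∑ c ∈ Cin, E c (θ c) y = ∑ c ∈ Cin, E c (θ c) x := by
        apply Finset.sum_congr rfl
        intro c hc
        exact hEloc c (θ c) y x fun v hv => hyA v ((Finset.mem_filter.1 hc).2 hv)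
      rw [hsplit y, hCinEq]
      rw [neg_add, neg_add, Real.exp_add, Real.exp_add]
    rw [step2]
    congr 1
    -- the product structure of the boundary sum
    have step3 : ∑ y ∈ A, Real.exp (-∑ c ∈ C1, E c (θ c) y) * Real.exp (-∑ c ∈ C2, E c (θ c) y)
        = ∑ pr ∈ B1 ×ˢ B2, Real.exp (-∑ c ∈ C1, E c (θ c) (sub1 x pr.1)) *
            Real.exp (-∑ c ∈ C2, E c (θ c) (sub2 x pr.2)) := by
      apply Finset.sum_nbij'
        (i := fun y => (fun v => if v ∉ Aq ∧ v ∈ W1 then y v else z v,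
                        fun v => if v ∉ Aq ∧ v ∉ W1 then y v else z v))
        (j := fun pr => fun v => if v ∈ Aq then x v else if v ∈ W1 then pr.1 v else pr.2 v)
      · intro y _
        rw [Finset.mem_product]
        constructor
        · refine Finset.mem_filter.2 ⟨Finset.mem_univ _, fun v hv => ?_⟩
          show (if v ∉ Aq ∧ v ∈ W1 then y v else z v) = z v
          rw [if_neg hv]
        · refine Finset.mem_filter.2 ⟨Finset.mem_univ _, fun v hv => ?_⟩
          show (if v ∉ Aq ∧ v ∉ W1 then y v else z v) = z v
          rw [if_neg hv]
      · intro pr _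
        refine Finset.mem_filter.2 ⟨Finset.mem_univ _, fun v hv => ?_⟩
        show (if v ∈ Aq then x v else if v ∈ W1 then pr.1 v else pr.2 v) = x v
        rw [if_pos hv]
      · intro y hy
        have hyA : ∀ v ∈ Aq, y v = x v := (Finset.mem_filter.1 hy).2
        funext v
        by_cases hvA : v ∈ Aq
        · rw [if_pos hvA]
          exact (hyA v hvA).symm
        · rw [if_neg hvA]
          by_cases hvW : v ∈ W1
          · rw [if_pos hvW]
            show (if v ∉ Aq ∧ v ∈ W1 then y v else z v) = y v
            rw [if_pos ⟨hvA, hvW⟩]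
          · rw [if_neg hvW]
            show (if v ∉ Aq ∧ v ∉ W1 then y v else z v) = y v
            rw [if_pos ⟨hvA, hvW⟩]
      · intro pr hpr
        rw [Finset.mem_product] at hpr
        have h1 := (Finset.mem_filter.1 hpr.1).2
        have h2 := (Finset.mem_filter.1 hpr.2).2
        have e1 : (fun v => if v ∉ Aq ∧ v ∈ W1 then
            (if v ∈ Aq then x v else if v ∈ W1 then pr.1 v else pr.2 v) else z v) = pr.1 := by
          funext v
          by_cases hvA : v ∈ Aq
          · rw [if_neg (by simp [hvA]), (h1 v (by simp [hvA])).symm]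
          · by_cases hvW : v ∈ W1
            · rw [if_pos ⟨hvA, hvW⟩, if_neg hvA, if_pos hvW]
            · rw [if_neg (by simp [hvW]), (h1 v (by simp [hvW])).symm]
        have e2 : (fun v => if v ∉ Aq ∧ v ∉ W1 then
            (if v ∈ Aq then x v else if v ∈ W1 then pr.1 v else pr.2 v) else z v) = pr.2 := by
          funext v
          by_cases hvA : v ∈ Aq
          · rw [if_neg (by simp [hvA]), (h2 v (by simp [hvA])).symm]
          · by_cases hvW : v ∈ W1
            · rw [if_neg (by simp [hvW]), (h2 v (by simp [hvA, hvW])).symm]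
            · rw [if_pos ⟨hvA, hvW⟩, if_neg hvA, if_neg hvW]
        exact Prod.ext e1 e2
      · intro y hy
        have hyA : ∀ v ∈ Aq, y v = x v := (Finset.mem_filter.1 hy).2
        have hE1 : ∑ c ∈ C1, E c (θ c) y = ∑ c ∈ C1, E c (θ c)
            (sub1 x (fun v => if v ∉ Aq ∧ v ∈ W1 then y v else z v)) := by
          apply Finset.sum_congr rfl
          intro c hc
          apply hEloc
          intro v hv
          simp only [hsub1_def]
          by_cases hvA : v ∈ Aq
          · simp [hvA, hyA v hvA]
          · have hvW : v ∈ W1 := (Finset.mem_filter.1 hc).2 v hv hvA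
            simp [hvA, hvW]
        have hE2 : ∑ c ∈ C2, E c (θ c) y = ∑ c ∈ C2, E c (θ c)
            (sub2 x (fun v => if v ∉ Aq ∧ v ∉ W1 then y v else z v)) := by
          apply Finset.sum_congr rfl
          intro c hc
          apply hEloc
          intro v hv
          simp only [hsub2_def]
          by_cases hvA : v ∈ Aq
          · simp [hvA, hyA v hvA]
          · have hvW : v ∉ W1 := (hC2i c hc).2 v hv hvA
            simp [hvA, hvW]
        rw [← hE1, ← hE2]
    rw [step3, Finset.sum_product]
    exact (Finset.sum_mul_sum B1 B2
      (fun y1 => Real.exp (-∑ c ∈ C1, E c (θ c) (sub1 x y1)))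
      (fun y2 => Real.exp (-∑ c ∈ C2, E c (θ c) (sub2 x y2)))).symm
  -- the key identity between the two representations
  have hkey : ∀ x : ∀ v, X v,
      Real.log (1 / Z') - ∑ c ∈ C', E c (α c) x =
      (Real.log (1 / Z) - ∑ c ∈ Cin, E c (θ c) x) +
        (Real.log (S1 x) + Real.log (S2 x)) := by
    intro x
    have h12 : (1 / Z') * Real.exp (-∑ c ∈ C', E c (α c) x)
        = (1 / Z) * (Real.exp (-∑ c ∈ Cin, E c (θ c) x) * (S1 x * S2 x)) :=
      (hmarg x).symm.trans (hfact x)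
    have hlog := congrArg Real.log h12
    rw [Real.log_mul (one_div_ne_zero hZ'.ne') (Real.exp_ne_zero _), Real.log_exp,
      Real.log_mul (one_div_ne_zero hZ.ne')
        (mul_ne_zero (Real.exp_ne_zero _) (mul_ne_zero (hS1pos x).ne' (hS2pos x).ne')),
      Real.log_mul (Real.exp_ne_zero _) (mul_ne_zero (hS1pos x).ne' (hS2pos x).ne'),
      Real.log_mul (hS1pos x).ne' (hS2pos x).ne', Real.log_exp] at hlog
    linarith [hlog]
  -- apply the Möbius functional
  have hEE : E q (α q) = E q (θ q) := by
    funext x0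
    have hL : LAPphi z q (fun y => Real.log (1 / Z') - ∑ c ∈ C', E c (α c) y) x0
        = -(E q (α q) x0) :=
      LAPphi_rep z q x0 (Real.log (1 / Z')) C' (fun c => E c (α c))
        (fun c _ => hEloc c (α c)) (fun c _ y h => hEnorm c (α c) y h) hqC' i hiq
    have hR : LAPphi z q
        (fun y => (Real.log (1 / Z) - ∑ c ∈ Cin, E c (θ c) y) +
          (Real.log (S1 y) + Real.log (S2 y))) x0 = -(E q (θ q) x0) :=
      LAPphi_main z q x0 (Real.log (1 / Z)) Cin (fun c => E c (θ c))
        (fun y => Real.log (S1 y)) (fun y => Real.log (S2 y))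
        (fun c _ => hEloc c (θ c)) (fun c _ y h => hEnorm c (θ c) y h) hqCin
        j i i hjq hiq hiq
        (fun y y' h => congrArg Real.log (hS1indep y y' h))
        (fun y y' h => congrArg Real.log (hS2indep y y' h))
    have hmid : LAPphi z q (fun y => Real.log (1 / Z') - ∑ c ∈ C', E c (α c) y) x0
        = LAPphi z q (fun y => (Real.log (1 / Z) - ∑ c ∈ Cin, E c (θ c) y) +
            (Real.log (S1 y) + Real.log (S2 y))) x0 :=
      LAPphi_congr z q x0 hkey
    have := hL.symm.trans (hmid.trans hR)
    linarith [this]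
  exact hEident q (α q) (θ q) hEE
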